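/- If the complement of a graph G is disconnected with co-components V1, ..., Vt, then the minimum number of edge deletions to make G P4-free equals the sum over i of the minimum number of edge deletions to make the induced subgraph on Vi P4-free. -/

import Mathlib

open SimpleGraph

variable {V : Type*}

/-- The four (distinct) vertices `a, b, c, d` induce a path `a - b - c - d` in `G`. -/
def IsInducedP4 (G : SimpleGraph V) (a b c d : V) : Prop :=
  a ≠ b ∧ a ≠ c ∧ a ≠ d ∧ b ≠ c ∧ b ≠ d ∧ c ≠ d ∧
  G.Adj a b ∧ G.Adj b c ∧ G.Adj c d ∧ ¬ G.Adj a c ∧ ¬ G.Adj a d ∧ ¬ G.Adj b d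

/-- A graph is `P₄`-free (a cograph) if no four vertices induce a path on four vertices. -/
def P4Free (G : SimpleGraph V) : Prop := ∀ a b c d : V, ¬ IsInducedP4 G a b c d

/-- `M G`: the minimum number of edge deletions turning `G` into a `P₄`-free graph. -/
noncomputable def minCographEdgeDel (G : SimpleGraph V) : ℕ :=
  sInf {n : ℕ | ∃ E' : Finset (Sym2 V), E'.card = n ∧ P4Free (G.deleteEdges ↑E')}

lemma minCographEdgeDel_exists [Fintype V] [DecidableEq V] (G : SimpleGraph V) :
    ∃ E' : Finset (Sym2 V), E'.card = minCographEdgeDel G ∧ P4Free (G.deleteEdges ↑E') := by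
  have hne : {n : ℕ | ∃ E' : Finset (Sym2 V), E'.card = n ∧ P4Free (G.deleteEdges ↑E')}.Nonempty := by
    refine ⟨_, Finset.univ, rfl, fun a b c d h => ?_⟩
    exact (deleteEdges_adj.mp h.2.2.2.2.2.2.1).2 (by simp)
  obtain ⟨E', h1, h2⟩ := Nat.sInf_mem hne
  exact ⟨E', h1, h2⟩

lemma minCographEdgeDel_le (G : SimpleGraph V) (E' : Finset (Sym2 V))
    (h : P4Free (G.deleteEdges ↑E')) : minCographEdgeDel G ≤ E'.card :=
  Nat.sInf_le ⟨E', rfl, h⟩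

/-- Transfer of adjacency along a compatible pair of deletion sets. -/
lemma induce_del_adj (G : SimpleGraph V) {S : Set V} (F : Finset (Sym2 S))
    (E' : Finset (Sym2 V))
    (hc : ∀ x y : S, s(x, y) ∈ F ↔ s((x : V), (y : V)) ∈ E') (x y : S) :
    ((G.induce S).deleteEdges ↑F).Adj x y ↔ (G.deleteEdges ↑E').Adj x y := by
  simp only [deleteEdges_adj, induce, comap_adj, Function.Embedding.coe_subtype,
    Finset.coe_sort_coe, Finset.mem_coe, hc x y]

lemma isInducedP4_subtype_iff (G : SimpleGraph V) {S : Set V} (F : Finset (Sym2 S))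
    (E' : Finset (Sym2 V))
    (hc : ∀ x y : S, s(x, y) ∈ F ↔ s((x : V), (y : V)) ∈ E') (a b c d : S) :
    IsInducedP4 ((G.induce S).deleteEdges ↑F) a b c d ↔
      IsInducedP4 (G.deleteEdges ↑E') (a : V) b c d := by
  unfold IsInducedP4
  simp only [induce_del_adj G F E' hc, Subtype.coe_ne_coe, ne_eq]

/-- If the complement of `G` is disconnected, then the minimum number of edge
deletions needed to make `G` `P₄`-free equals the sum, over the co-components of `G` (the
connected components of the complement `Gᶜ`), of the minimum number of edge deletions needed
to make the induced subgraph on that co-component `P₄`-free. -/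
theorem minCographEdgeDel_co_disconnected [Fintype V] (G : SimpleGraph V)
    (hdis : ¬ Gᶜ.Connected) :
    minCographEdgeDel G =
      ∑ᶠ c : Gᶜ.ConnectedComponent, minCographEdgeDel (G.induce c.supp) := by
  classical
  haveI : Fintype Gᶜ.ConnectedComponent := Fintype.ofFinite _
  rw [finsum_eq_sum_of_fintype]
  -- the embedding of edge sets
  set fc : ∀ c : Gᶜ.ConnectedComponent, Sym2 (c.supp) → Sym2 V :=
    fun c => Sym2.map (fun x => (x : V)) with hfc
  have hfcinj : ∀ c, Function.Injective (fc c) := fun c => Sym2.map.injective Subtype.val_injective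
  -- endpoints of images lie in the component
  have hmem : ∀ (c : Gᶜ.ConnectedComponent) (F : Finset (Sym2 (c.supp))) (e : Sym2 V),
      e ∈ F.image (fc c) → ∀ v ∈ e, v ∈ c.supp := by
    rintro c F e he v hv
    obtain ⟨e', _, rfl⟩ := Finset.mem_image.mp he
    induction e' using Sym2.ind with
    | _ u w =>
      rw [hfc] at hv
      simp only [Sym2.map_pair_eq, Sym2.mem_iff] at hv
      rcases hv with rfl | rfl
      · exact u.2
      · exact w.2
  apply le_antisymm
  · -- ≤ : combine optimal deletion sets of the components
    choose F hFcard hFfree using fun c : Gᶜ.ConnectedComponent =>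
      minCographEdgeDel_exists (G.induce c.supp)
    set E' : Finset (Sym2 V) := Finset.univ.biUnion (fun c => (F c).image (fc c)) with hE'
    have hE'mem : ∀ e ∈ E', ∃ c : Gᶜ.ConnectedComponent, ∀ v ∈ e, v ∈ c.supp := by
      intro e he
      obtain ⟨c, _, hc⟩ := Finset.mem_biUnion.mp he
      exact ⟨c, hmem c (F c) e hc⟩
    have hiff : ∀ (K : Gᶜ.ConnectedComponent) (x y : K.supp),
        s(x, y) ∈ F K ↔ s((x : V), (y : V)) ∈ E' := by
      intro K x y
      constructor
      · intro h
        refine Finset.mem_biUnion.mpr ⟨K, Finset.mem_univ _, ?_⟩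
        have : fc K s(x, y) = s((x : V), (y : V)) := Sym2.map_pair_eq _ _ _
        rw [← this]
        exact Finset.mem_image_of_mem _ h
      · intro h
        obtain ⟨c, _, hc⟩ := Finset.mem_biUnion.mp h
        obtain ⟨e', he', heq⟩ := Finset.mem_image.mp hc
        have hx : (x : V) ∈ c.supp := by
          have := hmem c (F c) _ hc (x : V) (by simp)
          exact this
        have hcK : c = K := by
          have h1 := (ConnectedComponent.mem_supp_iff _ _).mp hx
          have h2 := (ConnectedComponent.mem_supp_iff _ _).mp x.2
          exact h1.symm.trans h2
        subst hcK
        have : e' = s(x, y) := by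
          apply hfcinj c
          rw [heq, hfc]
          simp [Sym2.map_pair_eq]
        rwa [this] at he'
    have hfree : P4Free (G.deleteEdges ↑E') := by
      intro a b c d h
      obtain ⟨hab, hac, had, hbc, hbd, hcd, h1, h2, h3, n1, n2, n3⟩ := h
      -- non-adjacent vertices lie in the same co-component
      have hsame : ∀ u v : V, ¬(G.deleteEdges ↑E').Adj u v → u ≠ v →
          Gᶜ.connectedComponentMk u = Gᶜ.connectedComponentMk v := by
        intro u v hn hne
        by_contra hneq
        have hGadj : G.Adj u v := by
          by_contra hg
          exact hneq (ConnectedComponent.sound ((G.compl_adj u v).mpr ⟨hne, hg⟩).reachable)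
        have : s(u, v) ∈ E' := by
          by_contra hE
          exact hn (deleteEdges_adj.mpr ⟨hGadj, hE⟩)
        obtain ⟨k, hk⟩ := hE'mem _ this
        have hu := (ConnectedComponent.mem_supp_iff _ _).mp (hk u (by simp))
        have hv := (ConnectedComponent.mem_supp_iff _ _).mp (hk v (by simp))
        exact hneq (hu.trans hv.symm)
      have eac := hsame a c n1 hac
      have ead := hsame a d n2 had
      have ebd := hsame b d n3 hbd
      set K := Gᶜ.connectedComponentMk a with hK
      have ha : a ∈ K.supp := (ConnectedComponent.mem_supp_iff _ _).mpr hK.symm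
      have hc : c ∈ K.supp := (ConnectedComponent.mem_supp_iff _ _).mpr eac.symm
      have hd : d ∈ K.supp := (ConnectedComponent.mem_supp_iff _ _).mpr ead.symm
      have hb : b ∈ K.supp := (ConnectedComponent.mem_supp_iff _ _).mpr (ebd.trans ead.symm)
      refine hFfree K ⟨a, ha⟩ ⟨b, hb⟩ ⟨c, hc⟩ ⟨d, hd⟩ ?_
      rw [isInducedP4_subtype_iff G (F K) E' (hiff K)]
      exact ⟨hab, hac, had, hbc, hbd, hcd, h1, h2, h3, n1, n2, n3⟩
    calc minCographEdgeDel G ≤ E'.card := minCographEdgeDel_le G E' hfree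
      _ = ∑ c : Gᶜ.ConnectedComponent, ((F c).image (fc c)).card := by
          rw [hE']
          apply Finset.card_biUnion
          intro c _ c' _ hcc'
          rw [Function.onFun, Finset.disjoint_left]
          intro e hec hec'
          have h1 := hmem c (F c) e hec
          have h2 := hmem c' (F c') e hec'
          induction e using Sym2.ind with
          | _ v w =>
            have hv : v ∈ s(v, w) := by simp
            exact hcc' (((ConnectedComponent.mem_supp_iff _ _).mp (h1 v hv)).symm.trans
              ((ConnectedComponent.mem_supp_iff _ _).mp (h2 v hv)))
      _ = ∑ c : Gᶜ.ConnectedComponent, minCographEdgeDel (G.induce c.supp) := by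
          apply Finset.sum_congr rfl
          intro c _
          rw [Finset.card_image_of_injective _ (hfcinj c), hFcard c]
  · -- ≥ : split an optimal deletion set along the components
    obtain ⟨E', hEcard, hEfree⟩ := minCographEdgeDel_exists G
    rw [← hEcard]
    set F : ∀ c : Gᶜ.ConnectedComponent, Finset (Sym2 (c.supp)) :=
      fun c => Finset.univ.filter (fun e => fc c e ∈ E') with hF
    have hciff : ∀ (c : Gᶜ.ConnectedComponent) (x y : c.supp),
        s(x, y) ∈ F c ↔ s((x : V), (y : V)) ∈ E' := by
      intro c x y
      rw [hF]
      simp [hfc, Sym2.map_pair_eq]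
    have hfree : ∀ c : Gᶜ.ConnectedComponent, P4Free ((G.induce c.supp).deleteEdges ↑(F c)) := by
      intro c x y z w h
      rw [isInducedP4_subtype_iff G (F c) E' (hciff c)] at h
      exact hEfree _ _ _ _ h
    calc ∑ c : Gᶜ.ConnectedComponent, minCographEdgeDel (G.induce c.supp)
        ≤ ∑ c : Gᶜ.ConnectedComponent, ((F c).image (fc c)).card := by
          apply Finset.sum_le_sum
          intro c _
          rw [Finset.card_image_of_injective _ (hfcinj c)]
          exact minCographEdgeDel_le _ _ (hfree c)
      _ = (Finset.univ.biUnion (fun c => (F c).image (fc c))).card := by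
          symm
          apply Finset.card_biUnion
          intro c _ c' _ hcc'
          rw [Function.onFun, Finset.disjoint_left]
          intro e hec hec'
          have h1 := hmem c (F c) e hec
          have h2 := hmem c' (F c') e hec'
          induction e using Sym2.ind with
          | _ v w =>
            have hv : v ∈ s(v, w) := by simp
            exact hcc' (((ConnectedComponent.mem_supp_iff _ _).mp (h1 v hv)).symm.trans
              ((ConnectedComponent.mem_supp_iff _ _).mp (h2 v hv)))
      _ ≤ E'.card := by
          apply Finset.card_le_card
          intro e he
          obtain ⟨c, _, hc⟩ := Finset.mem_biUnion.mp he
          obtain ⟨e', he', rfl⟩ := Finset.mem_image.mp hc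
          rw [hF] at he'
          exact (Finset.mem_filter.mp he').2
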